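/- Let q, p_Δ be the densities of N(0,I_d) and of π N(0,I_d)+(1-π)N(Δ,I_d) with π ∈ (0,1). For any δ > 0 and any x with ‖x‖ ≤ δ, ‖∇log p_Δ(x) - ∇log q(x)‖² ≤ (1-π)² ‖Δ‖² / (π² exp(-2δ‖Δ‖ + ‖Δ‖²)). -/

import Mathlib

open Real

variable {E : Type*} [NormedAddCommGroup E] [InnerProductSpace ℝ E] [CompleteSpace E]

lemma hasGradientAt_of_innerSL {f : E → ℝ} {w x : E} (h : HasFDerivAt f (innerSL ℝ w) x) :
    HasGradientAt f w x := by
  rw [hasGradientAt_iff_hasFDerivAt]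
  exact h

lemma grad_negsq (v x : E) : HasGradientAt (fun y => -‖y - v‖^2 / 2) (v - x) x := by
  apply hasGradientAt_of_innerSL
  have h1 : HasFDerivAt (fun y : E => y - v) (ContinuousLinearMap.id ℝ E) x :=
    (hasFDerivAt_id x).sub_const v
  have h2 := (h1.inner ℝ h1).const_mul (-(1:ℝ)/2)
  have heq : (fun y : E => -‖y - v‖^2 / 2)
      = fun y : E => (-(1:ℝ)/2) * (inner ℝ (y - v) (y - v) : ℝ) := by
    funext y
    rw [real_inner_self_eq_norm_sq]
    ring
  rw [heq]
  refine h2.congr_fderiv ?_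
  ext y
  simp [fderivInnerCLM_apply, inner_sub_left, inner_sub_right, real_inner_comm]
  ring

lemma HasGradientAt.scomp' {f : E → ℝ} {g : ℝ → ℝ} {g' : ℝ} {w x : E}
    (hg : HasDerivAt g g' (f x)) (hf : HasGradientAt f w x) :
    HasGradientAt (fun y => g (f y)) (g' • w) x := by
  rw [hasGradientAt_iff_hasFDerivAt] at hf ⊢
  rw [map_smul]
  exact hg.comp_hasFDerivAt x hf

lemma HasGradientAt.const_mul' {f : E → ℝ} {w x : E} (c : ℝ) (h : HasGradientAt f w x) :
    HasGradientAt (fun y => c * f y) (c • w) x := by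
  rw [hasGradientAt_iff_hasFDerivAt] at h ⊢
  rw [map_smul]
  exact h.const_mul c

lemma HasGradientAt.add' {f g : E → ℝ} {w u : E} {x : E}
    (hf : HasGradientAt f w x) (hg : HasGradientAt g u x) :
    HasGradientAt (fun y => f y + g y) (w + u) x := by
  rw [hasGradientAt_iff_hasFDerivAt] at hf hg ⊢
  rw [map_add]
  exact hf.add hg

lemma HasGradientAt.const_add' {f : E → ℝ} {w x : E} (c : ℝ) (h : HasGradientAt f w x) :
    HasGradientAt (fun y => c + f y) w x := by
  rw [hasGradientAt_iff_hasFDerivAt] at h ⊢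
  exact h.const_add c

lemma grad_expsq (v x : E) :
    HasGradientAt (fun y => Real.exp (-‖y - v‖^2 / 2)) (Real.exp (-‖x - v‖^2 / 2) • (v - x)) x :=
  HasGradientAt.scomp' (Real.hasDerivAt_exp _) (grad_negsq v x)

/-- bound on the squared score difference on the ball `‖x‖ ≤ δ`. -/
theorem score_difference_bound_on_ball
    (d : ℕ) (π' : ℝ) (hπ : π' ∈ Set.Ioo (0:ℝ) 1)
    (Δ : EuclideanSpace ℝ (Fin d))
    (q pΔ : EuclideanSpace ℝ (Fin d) → ℝ)
    (hq : ∀ x, q x = (2 * Real.pi) ^ (-(d:ℝ)/2) * Real.exp (-‖x‖^2 / 2))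
    (hp : ∀ x, pΔ x =
      π' * ((2 * Real.pi) ^ (-(d:ℝ)/2) * Real.exp (-‖x‖^2 / 2)) +
      (1 - π') * ((2 * Real.pi) ^ (-(d:ℝ)/2) * Real.exp (-‖x - Δ‖^2 / 2)))
    (δ : ℝ) (hδ : 0 < δ) :
    ∀ x, ‖x‖ ≤ δ →
      ‖gradient (fun y => Real.log (pΔ y)) x
          - gradient (fun y => Real.log (q y)) x‖^2
        ≤ (1 - π')^2 * ‖Δ‖^2
          / (π'^2 * Real.exp (-2 * δ * ‖Δ‖ + ‖Δ‖^2)) := by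
  obtain ⟨hπ0, hπ1⟩ := hπ
  have h1π : (0:ℝ) < 1 - π' := by linarith
  intro x hx
  set c : ℝ := (2 * Real.pi) ^ (-(d:ℝ)/2) with hc_def
  have hcpos : 0 < c := Real.rpow_pos_of_pos (by positivity) _
  set a : ℝ := Real.exp (-‖x‖^2 / 2) with ha_def
  set b : ℝ := Real.exp (-‖x - Δ‖^2 / 2) with hb_def
  have ha : 0 < a := Real.exp_pos _
  have hb : 0 < b := Real.exp_pos _
  -- gradient of log q
  have hgq0 : HasGradientAt (fun y : EuclideanSpace ℝ (Fin d) =>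
      Real.log (c * Real.exp (-‖y‖^2 / 2))) (-x) x := by
    have heq : (fun y : EuclideanSpace ℝ (Fin d) => Real.log (c * Real.exp (-‖y‖^2 / 2)))
        = fun y => Real.log c + (-‖y‖^2 / 2) := by
      funext y
      rw [Real.log_mul (ne_of_gt hcpos) (Real.exp_ne_zero _), Real.log_exp]
    rw [heq]
    have := (grad_negsq (0:EuclideanSpace ℝ (Fin d)) x).const_add' (Real.log c)
    simpa using this
  have hgq : HasGradientAt (fun y => Real.log (q y)) (-x) x :=
    hgq0.congr_of_eventuallyEq (Filter.Eventually.of_forall fun y => by simp only [hq])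
  -- gradient of log pΔ
  have g1 : HasGradientAt (fun y : EuclideanSpace ℝ (Fin d) => Real.exp (-‖y‖^2 / 2))
      (a • (-x)) x := by
    have := grad_expsq (0:EuclideanSpace ℝ (Fin d)) x
    simpa [ha_def] using this
  have g2 : HasGradientAt (fun y : EuclideanSpace ℝ (Fin d) => Real.exp (-‖y - Δ‖^2 / 2))
      (b • (Δ - x)) x := grad_expsq Δ x
  have gF : HasGradientAt (fun y : EuclideanSpace ℝ (Fin d) =>
      π' * (c * Real.exp (-‖y‖^2 / 2)) + (1 - π') * (c * Real.exp (-‖y - Δ‖^2 / 2)))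
      (π' • (c • (a • (-x))) + (1 - π') • (c • (b • (Δ - x)))) x :=
    ((g1.const_mul' c).const_mul' π').add' ((g2.const_mul' c).const_mul' (1 - π'))
  have hFpos : 0 < π' * (c * a) + (1 - π') * (c * b) := by positivity
  have gL : HasGradientAt (fun y : EuclideanSpace ℝ (Fin d) =>
      Real.log (π' * (c * Real.exp (-‖y‖^2 / 2)) + (1 - π') * (c * Real.exp (-‖y - Δ‖^2 / 2))))
      ((π' * (c * a) + (1 - π') * (c * b))⁻¹
        • (π' • (c • (a • (-x))) + (1 - π') • (c • (b • (Δ - x))))) x :=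
    HasGradientAt.scomp' (Real.hasDerivAt_log (ne_of_gt hFpos)) gF
  have hgp : HasGradientAt (fun y => Real.log (pΔ y))
      ((π' * (c * a) + (1 - π') * (c * b))⁻¹
        • (π' • (c • (a • (-x))) + (1 - π') • (c • (b • (Δ - x))))) x :=
    gL.congr_of_eventuallyEq (Filter.Eventually.of_forall fun y => by simp only [hp])
  rw [hgp.gradient, hgq.gradient, sub_neg_eq_add]
  set r : ℝ := ((1 - π') * (c * b)) / (π' * (c * a) + (1 - π') * (c * b)) with hr_def
  have hD : (π' * (c * a) + (1 - π') * (c * b))⁻¹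
        • (π' • (c • (a • (-x))) + (1 - π') • (c • (b • (Δ - x)))) + x = r • Δ := by
    rw [hr_def]
    match_scalars <;> field_simp <;> ring
  rw [hD, norm_smul, mul_pow, Real.norm_eq_abs, sq_abs]
  have hr0 : 0 ≤ r := by
    rw [hr_def]
    exact div_nonneg (mul_nonneg h1π.le (by positivity)) hFpos.le
  set R : ℝ := (1 - π') / π' * Real.exp (δ * ‖Δ‖ - ‖Δ‖^2 / 2) with hR_def
  have hrR : r ≤ R := by
    have hstep1 : r ≤ ((1 - π') * (c * b)) / (π' * (c * a)) := by
      rw [hr_def]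
      gcongr
      exact le_add_of_nonneg_right (mul_nonneg h1π.le (by positivity))
    have hstep2 : ((1 - π') * (c * b)) / (π' * (c * a)) = (1 - π') / π' * (b / a) := by
      field_simp
    have hba : b / a = Real.exp ((inner ℝ x Δ : ℝ) - ‖Δ‖^2 / 2) := by
      rw [ha_def, hb_def, ← Real.exp_sub]
      congr 1
      rw [norm_sub_sq_real]
      ring
    have hstep3 : (1 - π') / π' * (b / a) ≤ R := by
      rw [hba, hR_def]
      apply mul_le_mul_of_nonneg_left _ (div_nonneg h1π.le hπ0.le)
      apply Real.exp_le_exp.mpr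
      have h1 := real_inner_le_norm x Δ
      nlinarith [norm_nonneg Δ]
    exact hstep1.trans (hstep2 ▸ hstep3)
  calc r ^ 2 * ‖Δ‖ ^ 2 ≤ R ^ 2 * ‖Δ‖ ^ 2 := by
        exact mul_le_mul_of_nonneg_right (pow_le_pow_left₀ hr0 hrR 2) (by positivity)
    _ = (1 - π')^2 * ‖Δ‖^2 / (π'^2 * Real.exp (-2 * δ * ‖Δ‖ + ‖Δ‖^2)) := by
        rw [hR_def]
        have hexp : (Real.exp (δ * ‖Δ‖ - ‖Δ‖^2 / 2))^2
            = (Real.exp (-2 * δ * ‖Δ‖ + ‖Δ‖^2))⁻¹ := by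
          rw [← Real.exp_neg, sq, ← Real.exp_add]
          congr 1
          ring
        rw [mul_pow, div_pow, hexp]
        field_simp
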